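/- Let f : ℝ → ℝ be the sinc function, f(t) = sin(πt)/(πt) for t ≠ 0 and f(0) = 1, and for n ∈ ℤ^d define φ̂_n : ℝ^d → ℝ by φ̂_n(x) = ∏_{j=1}^d f(n_j + x_j). Then for every multiindex α ∈ ℕ^d and every x ∈ ℝ^d, the family (∂^α φ̂_n(x))_{n ∈ ℤ^d} is square-summable, and the tails tend to zero: ∑_{n ∈ ℤ^d, |n|_∞ > N} (∂^α φ̂_n(x))² → 0 as N → ∞. -/

import Mathlib

open scoped BigOperators
open intervalIntegral

/-- The sinc function: `f(t) = sin(πt)/(πt)` for `t ≠ 0` and `f(0) = 1`. -/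
noncomputable def sinc (t : ℝ) : ℝ :=
  if t = 0 then 1 else Real.sin (Real.pi * t) / (Real.pi * t)

/-- `φ̂_n(x) = ∏_{j=1}^d f(n_j + x_j)` where `f` is the sinc function. -/
noncomputable def phihat {d : ℕ} (n : Fin d → ℤ) (x : Fin d → ℝ) : ℝ :=
  ∏ j, sinc ((n j : ℝ) + x j)

/-- Partial derivative in the `j`-th coordinate direction. -/
noncomputable def coordDeriv {d : ℕ} {E : Type*} [NormedAddCommGroup E] [NormedSpace ℝ E]
    (j : Fin d) (g : (Fin d → ℝ) → E) : (Fin d → ℝ) → E :=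
  fun x => fderiv ℝ g x (Pi.single j 1)

/-- The multiindex partial derivative `∂^α = ∂^{α_1}_{x_1} ⋯ ∂^{α_d}_{x_d}`. -/
noncomputable def multiDeriv {d : ℕ} {E : Type*} [NormedAddCommGroup E] [NormedSpace ℝ E]
    (α : Fin d → ℕ) (g : (Fin d → ℝ) → E) : (Fin d → ℝ) → E :=
  (List.finRange d).foldr (fun j h => (coordDeriv j)^[α j] h) g


noncomputable def sincInt (m : ℕ) (t : ℝ) : ℝ :=
  ∫ s in (0:ℝ)..1, (Real.pi * s) ^ m * Real.cos (Real.pi * t * s + (m : ℝ) * (Real.pi / 2))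

lemma sincInt_cont (m : ℕ) (t : ℝ) :
    Continuous (fun s : ℝ => (Real.pi * s) ^ m * Real.cos (Real.pi * t * s + (m : ℝ) * (Real.pi / 2))) := by
  fun_prop

lemma sincInt_zero : sincInt 0 = sinc := by
  funext t
  unfold sincInt
  simp only [pow_zero, one_mul, Nat.cast_zero, zero_mul, add_zero]
  by_cases ht : t = 0
  · subst ht
    simp [sinc]
  · have hpt : Real.pi * t ≠ 0 := mul_ne_zero Real.pi_ne_zero ht
    have hder : ∀ s ∈ Set.uIcc (0:ℝ) 1,
        HasDerivAt (fun s => Real.sin (Real.pi * t * s) / (Real.pi * t))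
          (Real.cos (Real.pi * t * s)) s := by
      intro s _
      have h1 : HasDerivAt (fun s : ℝ => Real.pi * t * s) (Real.pi * t) s := by
        simpa using (hasDerivAt_id s).const_mul (Real.pi * t)
      have h2 := (Real.hasDerivAt_sin (Real.pi * t * s)).comp s h1
      have h3 := h2.div_const (Real.pi * t)
      refine h3.congr_deriv ?_
      field_simp
    have hint : IntervalIntegrable (fun s => Real.cos (Real.pi * t * s)) MeasureTheory.volume 0 1 := by
      apply Continuous.intervalIntegrable; fun_prop
    rw [intervalIntegral.integral_eq_sub_of_hasDerivAt hder hint]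
    simp [sinc, ht, hpt]

lemma sincInt_hasDerivAt (m : ℕ) (t₀ : ℝ) :
    HasDerivAt (sincInt m) (sincInt (m + 1) t₀) t₀ := by
  have hcont : ∀ (k : ℕ) (t : ℝ), Continuous
      (fun s : ℝ => (Real.pi * s) ^ k * Real.cos (Real.pi * t * s + (k : ℝ) * (Real.pi / 2))) := by
    intro k t; fun_prop
  have key := intervalIntegral.hasDerivAt_integral_of_dominated_loc_of_deriv_le
    (F := fun (x : ℝ) (s : ℝ) => (Real.pi * s) ^ m * Real.cos (Real.pi * x * s + (m : ℝ) * (Real.pi / 2)))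
    (F' := fun (x : ℝ) (s : ℝ) => (Real.pi * s) ^ (m + 1) * Real.cos (Real.pi * x * s + ((m : ℝ) + 1) * (Real.pi / 2)))
    (x₀ := t₀) (a := 0) (b := 1) (μ := MeasureTheory.volume)
    (bound := fun _ => Real.pi ^ (m + 1)) (s := Set.univ) Filter.univ_mem
    ?_ ?_ ?_ ?_ ?_ ?_
  · have h := key.2
    have : sincInt (m+1) t₀ = (∫ s in (0:ℝ)..1, (Real.pi * s) ^ (m+1) * Real.cos (Real.pi * t₀ * s + ((m:ℝ)+1) * (Real.pi/2))) := by
      unfold sincInt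
      push_cast
      rfl
    rwa [← this] at h
  · filter_upwards with x
    exact (hcont m x).aestronglyMeasurable
  · exact ((hcont m t₀)).intervalIntegrable 0 1
  · have : Continuous (fun s : ℝ => (Real.pi * s) ^ (m+1) * Real.cos (Real.pi * t₀ * s + ((m:ℝ)+1) * (Real.pi / 2))) := by fun_prop
    exact this.aestronglyMeasurable
  · filter_upwards with s hs x _
    rw [Set.uIoc_of_le (by norm_num : (0:ℝ) ≤ 1)] at hs
    have h1 : 0 < s := hs.1
    have h2 : s ≤ 1 := hs.2
    have hπ := Real.pi_pos
    have habs : |(Real.pi * s) ^ (m+1)| = (Real.pi * s) ^ (m+1) := by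
      apply abs_of_nonneg; positivity
    rw [Real.norm_eq_abs, abs_mul, habs]
    calc (Real.pi * s) ^ (m+1) * |Real.cos (Real.pi * x * s + ((m:ℝ)+1) * (Real.pi/2))|
        ≤ (Real.pi * s) ^ (m+1) * 1 := by
          apply mul_le_mul_of_nonneg_left (Real.abs_cos_le_one _); positivity
      _ ≤ Real.pi ^ (m+1) := by
          rw [mul_one]
          apply pow_le_pow_left₀ (by positivity)
          nlinarith
  · exact intervalIntegrable_const
  · filter_upwards with s hs x _
    have h1 : HasDerivAt (fun x : ℝ => Real.pi * x * s + (m:ℝ) * (Real.pi/2)) (Real.pi * s) x := by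
      have : HasDerivAt (fun x : ℝ => Real.pi * x) Real.pi x := by
        simpa using (hasDerivAt_id x).const_mul Real.pi
      simpa using (this.mul_const s).add_const ((m:ℝ) * (Real.pi/2))
    have h2 := (Real.hasDerivAt_cos (Real.pi * x * s + (m:ℝ) * (Real.pi/2))).comp x h1
    have h3 := h2.const_mul ((Real.pi * s) ^ m)
    refine h3.congr_deriv ?_
    have harg : Real.pi * x * s + ((m:ℝ)+1) * (Real.pi/2)
        = (Real.pi * x * s + (m:ℝ) * (Real.pi/2)) + Real.pi/2 := by ring
    rw [harg, Real.cos_add_pi_div_two]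
    ring

lemma sincInt_bound (m : ℕ) (t : ℝ) : |sincInt m t| ≤ Real.pi ^ m := by
  have hπ := Real.pi_pos
  have h := intervalIntegral.norm_integral_le_of_norm_le_const
    (C := Real.pi ^ m) (a := (0:ℝ)) (b := 1)
    (f := fun s => (Real.pi * s) ^ m * Real.cos (Real.pi * t * s + (m : ℝ) * (Real.pi / 2)))
    ?_
  · simpa [Real.norm_eq_abs, sincInt] using h
  · intro s hs
    rw [Set.uIoc_of_le (by norm_num : (0:ℝ) ≤ 1)] at hs
    have hs1 : (0:ℝ) ≤ s := hs.1.le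
    have hnn : (0:ℝ) ≤ (Real.pi * s) ^ m := pow_nonneg (mul_nonneg hπ.le hs1) m
    rw [Real.norm_eq_abs, abs_mul, abs_of_nonneg hnn]
    calc (Real.pi * s) ^ m * |Real.cos _| ≤ (Real.pi * s) ^ m * 1 :=
          mul_le_mul_of_nonneg_left (Real.abs_cos_le_one _) hnn
      _ ≤ Real.pi ^ m := by
          rw [mul_one]; apply pow_le_pow_left₀ (mul_nonneg hπ.le hs1); nlinarith [hs.2]

lemma iteratedDeriv_sinc (m : ℕ) : iteratedDeriv m sinc = sincInt m := by
  induction m with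
  | zero => rw [iteratedDeriv_zero, sincInt_zero]
  | succ k ih =>
    rw [iteratedDeriv_succ, ih]
    funext t
    exact (sincInt_hasDerivAt k t).deriv

lemma sinc_hasDerivAt_iter (m : ℕ) (t : ℝ) :
    HasDerivAt (iteratedDeriv m sinc) (iteratedDeriv (m + 1) sinc t) t := by
  rw [iteratedDeriv_sinc, iteratedDeriv_sinc]
  exact sincInt_hasDerivAt m t

lemma sinc_bound (m : ℕ) (t : ℝ) : |iteratedDeriv m sinc t| ≤ Real.pi ^ m := by
  rw [iteratedDeriv_sinc]; exact sincInt_bound m t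

noncomputable def sinS (m : ℕ) (t : ℝ) : ℝ :=
  Real.pi ^ m * Real.sin (Real.pi * t + (m : ℝ) * (Real.pi / 2)) / Real.pi

lemma sinS_hasDerivAt (m : ℕ) (t : ℝ) : HasDerivAt (sinS m) (sinS (m + 1) t) t := by
  have h1 : HasDerivAt (fun t : ℝ => Real.pi * t + (m:ℝ) * (Real.pi/2)) Real.pi t := by
    simpa using ((hasDerivAt_id t).const_mul Real.pi).add_const ((m:ℝ) * (Real.pi/2))
  have h2 := (Real.hasDerivAt_sin (Real.pi * t + (m:ℝ) * (Real.pi/2))).comp t h1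
  have h3 := (h2.div_const Real.pi).const_mul (Real.pi ^ m)
  refine (h3.congr_of_eventuallyEq (Filter.Eventually.of_forall fun u => ?_)).congr_deriv ?_
  · unfold sinS; simp only [Function.comp_apply]; ring
  · unfold sinS
    push_cast
    have harg : Real.pi * t + ((m:ℝ)+1) * (Real.pi/2)
        = (Real.pi * t + (m:ℝ) * (Real.pi/2)) + Real.pi/2 := by ring
    rw [harg, Real.sin_add_pi_div_two]
    field_simp
    ring

lemma sinS_bound (m : ℕ) (t : ℝ) : |sinS m t| ≤ Real.pi ^ m := by
  have hπ := Real.pi_pos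
  have h2 : (1:ℝ) ≤ Real.pi := by linarith [Real.pi_gt_three]
  have hsin : |Real.sin (Real.pi * t + (m : ℝ) * (Real.pi / 2))| ≤ 1 :=
    abs_le.2 ⟨Real.neg_one_le_sin _, Real.sin_le_one _⟩
  unfold sinS
  rw [abs_div, abs_of_pos hπ, abs_mul, abs_of_pos (pow_pos hπ m)]
  calc Real.pi ^ m * |Real.sin _| / Real.pi
      ≤ Real.pi ^ m * 1 / 1 := by
        gcongr <;> first | exact pow_nonneg hπ.le m | exact hsin | exact h2
    _ = Real.pi ^ m := by ring

lemma iteratedDeriv_sinpi (m : ℕ) :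
    iteratedDeriv m (fun t : ℝ => Real.sin (Real.pi * t) / Real.pi) = sinS m := by
  induction m with
  | zero =>
    rw [iteratedDeriv_zero]
    funext t; unfold sinS; norm_num
  | succ k ih =>
    rw [iteratedDeriv_succ, ih]
    funext t
    exact (sinS_hasDerivAt k t).deriv

lemma id_mul_sinc : (fun t : ℝ => t * sinc t) = fun t : ℝ => Real.sin (Real.pi * t) / Real.pi := by
  funext t
  by_cases ht : t = 0
  · subst ht; simp [sinc]
  · have hπ := Real.pi_ne_zero
    simp only [sinc, if_neg ht]
    field_simp

lemma leibniz_sinc (m : ℕ) :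
    iteratedDeriv (m + 1) (fun t : ℝ => t * sinc t)
      = fun t : ℝ => t * iteratedDeriv (m + 1) sinc t + ((m : ℝ) + 1) * iteratedDeriv m sinc t := by
  induction m with
  | zero =>
    rw [iteratedDeriv_one]
    funext t
    have h : HasDerivAt (fun t : ℝ => t * sinc t)
        (1 * sinc t + t * iteratedDeriv 1 sinc t) t := by
      have hs : HasDerivAt sinc (iteratedDeriv 1 sinc t) t := by
        simpa using sinc_hasDerivAt_iter 0 t
      exact (hasDerivAt_id t).mul hs
    rw [h.deriv]
    simp [iteratedDeriv_zero]
    ring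
  | succ k ih =>
    rw [iteratedDeriv_succ, ih]
    funext t
    have h : HasDerivAt (fun t : ℝ => t * iteratedDeriv (k + 1) sinc t + ((k : ℝ) + 1) * iteratedDeriv k sinc t)
        ((1 * iteratedDeriv (k + 1) sinc t + t * iteratedDeriv (k + 2) sinc t)
          + ((k : ℝ) + 1) * iteratedDeriv (k + 1) sinc t) t := by
      exact ((hasDerivAt_id t).mul (sinc_hasDerivAt_iter (k+1) t)).add
        ((sinc_hasDerivAt_iter k t).const_mul ((k : ℝ) + 1))
    rw [h.deriv]
    push_cast
    ring

lemma sinc_decay (m : ℕ) (t : ℝ) :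
    |t| * |iteratedDeriv m sinc t| ≤ ((m : ℝ) + 1) * Real.pi ^ (m + 1) := by
  have hπ := Real.pi_pos
  have h1 : (1:ℝ) ≤ Real.pi := by linarith [Real.pi_gt_three]
  rcases m with _ | k
  · -- m = 0
    rw [iteratedDeriv_zero, ← abs_mul]
    have : t * sinc t = Real.sin (Real.pi * t) / Real.pi := congrFun id_mul_sinc t
    rw [this, abs_div, abs_of_pos hπ]
    have hsin : |Real.sin (Real.pi * t)| ≤ 1 := abs_le.2 ⟨Real.neg_one_le_sin _, Real.sin_le_one _⟩
    have hmain : |Real.sin (Real.pi * t)| / Real.pi ≤ 1 := by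
      rw [div_le_one hπ]; linarith
    refine hmain.trans ?_
    norm_num
    linarith
  · -- m = k+1
    have hL := congrFun (leibniz_sinc k) t
    have hG : iteratedDeriv (k + 1) (fun t : ℝ => t * sinc t) t = sinS (k+1) t := by
      rw [id_mul_sinc, iteratedDeriv_sinpi]
    have key : t * iteratedDeriv (k + 1) sinc t
        = sinS (k+1) t - ((k : ℝ) + 1) * iteratedDeriv k sinc t := by
      rw [← hG, hL]; ring
    rw [← abs_mul, key]
    have hb1 := sinS_bound (k+1) t
    have hb2 := sinc_bound k t
    have hpowle : Real.pi ^ k ≤ Real.pi ^ (k + 2) := pow_le_pow_right₀ h1 (by omega)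
    have hpowle2 : Real.pi ^ (k+1) ≤ Real.pi ^ (k + 2) := pow_le_pow_right₀ h1 (by omega)
    have hnn : (0:ℝ) ≤ (k:ℝ) + 1 := by positivity
    calc |sinS (k+1) t - ((k : ℝ) + 1) * iteratedDeriv k sinc t|
        ≤ |sinS (k+1) t| + |((k : ℝ) + 1) * iteratedDeriv k sinc t| := abs_sub _ _
      _ ≤ Real.pi ^ (k+1) + ((k : ℝ) + 1) * Real.pi ^ k := by
          rw [abs_mul, abs_of_nonneg hnn]
          gcongr
      _ ≤ Real.pi ^ (k+2) + ((k : ℝ) + 1) * Real.pi ^ (k+2) := by gcongr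
      _ = (((k:ℕ)+1 : ℝ) + 1) * Real.pi ^ (k + 1 + 1) := by push_cast; ring
      _ = ((((k:ℕ)+1 : ℕ) : ℝ) + 1) * Real.pi ^ (k + 1 + 1) := by push_cast; ring

lemma sinc_le (m : ℕ) (t : ℝ) :
    |iteratedDeriv m sinc t| ≤ ((m : ℝ) + 1) * Real.pi ^ (m + 1) / max 1 |t| := by
  have hπ := Real.pi_pos
  have h1 : (1:ℝ) ≤ Real.pi := by linarith [Real.pi_gt_three]
  rcases le_total |t| 1 with h | h
  · rw [max_eq_left h, div_one]
    calc |iteratedDeriv m sinc t| ≤ Real.pi ^ m := sinc_bound m t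
      _ ≤ ((m : ℝ) + 1) * Real.pi ^ (m+1) := by
          have : Real.pi ^ m ≤ Real.pi ^ (m+1) := pow_le_pow_right₀ h1 (by omega)
          nlinarith [pow_pos hπ m, pow_pos hπ (m+1)]
  · rw [max_eq_right h, le_div_iff₀ (by linarith : (0:ℝ) < |t|)]
    calc |iteratedDeriv m sinc t| * |t| = |t| * |iteratedDeriv m sinc t| := mul_comm _ _
      _ ≤ ((m : ℝ) + 1) * Real.pi ^ (m + 1) := sinc_decay m t

lemma summable_inv_max_sq (c : ℝ) :
    Summable (fun k : ℤ => (1 / max 1 |(k : ℝ) + c|) ^ 2) := by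
  have hg : Summable (fun k : ℤ => 1 / (k : ℝ) ^ 2) := Real.summable_one_div_int_pow.2 one_lt_two
  apply summable_of_isBigO hg
  rw [Asymptotics.isBigO_iff]
  refine ⟨4, ?_⟩
  have hfin : {k : ℤ | ¬ (2 * |c| + 2 ≤ |(k : ℝ)|)}.Finite := by
    apply Set.Finite.subset (Set.finite_Icc (-(⌈2 * |c| + 2⌉) : ℤ) ⌈2 * |c| + 2⌉)
    intro k hk
    simp only [Set.mem_setOf_eq, not_le] at hk
    have h1 : |(k:ℝ)| < (⌈2 * |c| + 2⌉ : ℤ) := lt_of_lt_of_le hk (Int.le_ceil _)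
    rw [← Int.cast_abs] at h1
    have : |k| < ⌈2 * |c| + 2⌉ := by exact_mod_cast h1
    constructor <;> [linarith [neg_abs_le k]; linarith [le_abs_self k]]
  rw [Filter.eventually_cofinite]
  apply Set.Finite.subset hfin
  intro k hk
  simp only [Set.mem_setOf_eq, not_le] at hk ⊢
  by_contra hcon
  push_neg at hcon
  have hge : 2 * |c| + 2 ≤ |(k:ℝ)| := hcon
  apply absurd hk
  apply not_lt.2
  -- |k| ≥ 2|c|+2 → bound holds
  have habs : |(k:ℝ) + c| ≥ |(k:ℝ)| / 2 := by
    have := abs_sub_abs_le_abs_sub (k:ℝ) (-c)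
    simp only [sub_neg_eq_add] at this
    have h2 : |(-c : ℝ)| = |c| := abs_neg c
    nlinarith [abs_nonneg ((k:ℝ) + c), abs_nonneg c]
  have hk2 : (2:ℝ) ≤ |(k:ℝ)| := by nlinarith [abs_nonneg c]
  have h1 : (1:ℝ) ≤ |(k:ℝ)+c| := by linarith
  rw [max_eq_right h1]
  rw [Real.norm_eq_abs, Real.norm_eq_abs]
  have hknz : (0:ℝ) < |(k:ℝ)| := by linarith
  have hx : (0:ℝ) < (k:ℝ)^2 := by rw [← sq_abs]; exact pow_pos hknz 2
  have e1 : |(1 / |(k:ℝ) + c|) ^ 2| = (1 / |(k:ℝ)+c|)^2 := abs_of_nonneg (by positivity)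
  have e2 : |1 / (k:ℝ)^2| = 1/(k:ℝ)^2 := abs_of_nonneg (by positivity)
  rw [e1, e2]
  rw [div_pow, one_pow, mul_one_div, div_le_div_iff₀ (by positivity) hx]
  have hsq : (k:ℝ)^2 = |(k:ℝ)|^2 := (sq_abs _).symm
  nlinarith [sq_nonneg (|(k:ℝ)+c| - |(k:ℝ)|/2)]

lemma summable_pi_prod : ∀ (d : ℕ) (c : Fin d → ℤ → ℝ),
    (∀ j k, 0 ≤ c j k) → (∀ j, Summable (c j)) →
    Summable (fun n : Fin d → ℤ => ∏ j, c j (n j)) := by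
  intro d
  induction d with
  | zero =>
    intro c _ _
    exact .of_finite
  | succ d ih =>
    intro c hpos hsum
    refine (Equiv.summable_iff (Fin.consEquiv (fun _ : Fin (d+1) => ℤ))).mp ?_
    have heq : ((fun n : Fin (d+1) → ℤ => ∏ j, c j (n j)) ∘ (Fin.consEquiv (fun _ : Fin (d+1) => ℤ)))
        = fun p : ℤ × (Fin d → ℤ) => c 0 p.1 * ∏ j : Fin d, c j.succ (p.2 j) := by
      funext p
      simp [Fin.consEquiv, Fin.prod_univ_succ]
    rw [heq]
    have hS : Summable (fun q : Fin d → ℤ => ∏ j : Fin d, c j.succ (q j)) :=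
      ih (fun j => c j.succ) (fun j k => hpos _ _) (fun j => hsum _)
    exact Summable.mul_of_nonneg (f := c 0) (g := fun q : Fin d → ℤ => ∏ j : Fin d, c j.succ (q j))
      (hsum 0) hS (fun k => hpos 0 k) (fun p => Finset.prod_nonneg fun j _ => hpos _ _)

noncomputable def sincProd {d : ℕ} (n : Fin d → ℤ) (β : Fin d → ℕ) : (Fin d → ℝ) → ℝ :=
  fun x => ∏ j, iteratedDeriv (β j) sinc ((n j : ℝ) + x j)

lemma coordDeriv_sincProd {d : ℕ} (n : Fin d → ℤ) (β : Fin d → ℕ) (j : Fin d) :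
    coordDeriv j (sincProd n β) = sincProd n (Function.update β j (β j + 1)) := by
  funext x
  have hf : ∀ i ∈ Finset.univ, HasFDerivAt
      (fun x : Fin d → ℝ => iteratedDeriv (β i) sinc ((n i : ℝ) + x i))
      ((iteratedDeriv (β i + 1) sinc ((n i : ℝ) + x i)) •
        (ContinuousLinearMap.proj i : ((Fin d → ℝ) →L[ℝ] ℝ))) x := by
    intro i _
    have h1 : HasFDerivAt (fun x : Fin d → ℝ => (n i : ℝ) + x i)
        (ContinuousLinearMap.proj i : ((Fin d → ℝ) →L[ℝ] ℝ)) x :=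
      ((ContinuousLinearMap.proj (R := ℝ) (φ := fun _ : Fin d => ℝ) i).hasFDerivAt).const_add ((n i : ℝ))
    exact (sinc_hasDerivAt_iter (β i) _).comp_hasFDerivAt x h1
  have H := HasFDerivAt.finset_prod hf
  have hform : sincProd n β = (∏ i ∈ Finset.univ,
      (fun x : Fin d → ℝ => iteratedDeriv (β i) sinc ((n i : ℝ) + x i)) ·) := by
    funext y; simp [sincProd]
  rw [coordDeriv]
  rw [show sincProd n β = _ from hform]
  rw [H.fderiv]
  rw [ContinuousLinearMap.sum_apply]
  rw [Finset.sum_eq_single j]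
  · simp only [ContinuousLinearMap.smul_apply, ContinuousLinearMap.proj_apply,
      Pi.single_eq_same, smul_eq_mul, mul_one]
    rw [sincProd]
    rw [← Finset.prod_erase_mul Finset.univ _ (Finset.mem_univ j)]
    congr 1
    · apply Finset.prod_congr rfl
      intro k hk
      rw [Function.update_of_ne (Finset.mem_erase.1 hk).1]
    · rw [Function.update_self]
  · intro i _ hij
    simp only [ContinuousLinearMap.smul_apply, ContinuousLinearMap.proj_apply, smul_eq_mul]
    rw [Pi.single_eq_of_ne hij]
    simp
  · intro h; exact absurd (Finset.mem_univ j) h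

lemma coordDeriv_iter_sincProd {d : ℕ} (n : Fin d → ℤ) (β : Fin d → ℕ) (j : Fin d) (m : ℕ) :
    (coordDeriv j)^[m] (sincProd n β) = sincProd n (Function.update β j (β j + m)) := by
  induction m with
  | zero => simp
  | succ k ih =>
    rw [Function.iterate_succ_apply', ih, coordDeriv_sincProd]
    have harg : Function.update (Function.update β j (β j + k)) j
          (Function.update β j (β j + k) j + 1) = Function.update β j (β j + (k + 1)) := by
      funext i
      by_cases hij : i = j
      · subst hij
        simp only [Function.update_self]; omega
      · simp only [Function.update_of_ne hij]
    rw [harg]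

lemma foldr_sincProd {d : ℕ} (n : Fin d → ℤ) (α : Fin d → ℕ) :
    ∀ (L : List (Fin d)), L.Nodup → ∀ (β : Fin d → ℕ),
    L.foldr (fun j h => (coordDeriv j)^[α j] h) (sincProd n β)
      = sincProd n (fun j => if j ∈ L then β j + α j else β j) := by
  intro L
  induction L with
  | nil =>
    intro _ β
    simp
  | cons j L ihL =>
    intro hnd β
    have hndL : L.Nodup := (List.nodup_cons.1 hnd).2
    have hjL : j ∉ L := (List.nodup_cons.1 hnd).1
    rw [List.foldr_cons, ihL hndL β, coordDeriv_iter_sincProd]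
    have hβ : Function.update (fun k => if k ∈ L then β k + α k else β k) j
          ((if j ∈ L then β j + α j else β j) + α j)
        = fun k => if k ∈ j :: L then β k + α k else β k := by
      funext k
      by_cases hkj : k = j
      · subst hkj
        rw [Function.update_self]
        simp [hjL, List.mem_cons]
      · rw [Function.update_of_ne hkj]
        by_cases hkL : k ∈ L <;> simp [hkL, List.mem_cons, hkj]
    rw [hβ]

lemma multiDeriv_phihat {d : ℕ} (α : Fin d → ℕ) (n : Fin d → ℤ) (x : Fin d → ℝ) :
    multiDeriv α (phihat n) x = ∏ j, iteratedDeriv (α j) sinc ((n j : ℝ) + x j) := by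
  have h0 : phihat n = sincProd n (fun _ => 0) := by
    funext y
    simp [phihat, sincProd, iteratedDeriv_zero]
  rw [multiDeriv, h0, foldr_sincProd n α (List.finRange d) (List.nodup_finRange d) _]
  simp [sincProd, List.mem_finRange]


lemma summable_sq_sinc (m : ℕ) (c : ℝ) :
    Summable (fun k : ℤ => (iteratedDeriv m sinc ((k : ℝ) + c)) ^ 2) := by
  have hC : (0:ℝ) < ((m : ℝ) + 1) * Real.pi ^ (m + 1) := by positivity
  set C := ((m : ℝ) + 1) * Real.pi ^ (m + 1) with hCdef
  have hS : Summable (fun k : ℤ => C ^ 2 * (1 / max 1 |(k : ℝ) + c|) ^ 2) :=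
    (summable_inv_max_sq c).mul_left _
  apply Summable.of_nonneg_of_le (fun k => sq_nonneg _) ?_ hS
  intro k
  have hle := sinc_le m ((k : ℝ) + c)
  have hmax : (0:ℝ) < max 1 |(k : ℝ) + c| := lt_of_lt_of_le one_pos (le_max_left _ _)
  have habs : |iteratedDeriv m sinc ((k : ℝ) + c)| ≤ C / max 1 |(k : ℝ) + c| := hle
  calc (iteratedDeriv m sinc ((k : ℝ) + c)) ^ 2
      = |iteratedDeriv m sinc ((k : ℝ) + c)| ^ 2 := (sq_abs _).symm
    _ ≤ (C / max 1 |(k : ℝ) + c|) ^ 2 := by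
        apply pow_le_pow_left₀ (abs_nonneg _) habs
    _ = C ^ 2 * (1 / max 1 |(k : ℝ) + c|) ^ 2 := by
        rw [div_pow, mul_pow, div_pow, one_pow, mul_one_div]

/-- For every multiindex `α ∈ ℕ^d` and every `x ∈ ℝ^d`, the family
`(∂^α φ̂_n(x))_{n ∈ ℤ^d}` is square-summable, and the tails tend to zero:
`∑_{|n|_∞ > N} (∂^α φ̂_n(x))² → 0` as `N → ∞`. -/
theorem stmt3 (d : ℕ) (α : Fin d → ℕ) (x : Fin d → ℝ) :
    Summable (fun n : Fin d → ℤ => (multiDeriv α (phihat n) x) ^ 2) ∧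
    Filter.Tendsto
      (fun N : ℕ =>
        ∑' n : {n : Fin d → ℤ // N < Finset.univ.sup fun j => (n j).natAbs},
          (multiDeriv α (phihat n.1) x) ^ 2)
      Filter.atTop (nhds 0) := by
  have hfun : ∀ n : Fin d → ℤ, (multiDeriv α (phihat n) x) ^ 2
      = ∏ j, (iteratedDeriv (α j) sinc ((n j : ℝ) + x j)) ^ 2 := by
    intro n
    rw [multiDeriv_phihat, ← Finset.prod_pow]
  have hsum : Summable (fun n : Fin d → ℤ => (multiDeriv α (phihat n) x) ^ 2) := by
    have := summable_pi_prod d (fun j k => (iteratedDeriv (α j) sinc ((k : ℝ) + x j)) ^ 2)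
      (fun j k => sq_nonneg _) (fun j => summable_sq_sinc (α j) (x j))
    exact this.congr (fun n => (hfun n).symm)
  refine ⟨hsum, ?_⟩
  classical
  set f : (Fin d → ℤ) → ℝ := fun n => (multiDeriv α (phihat n) x) ^ 2 with hfdef
  set box : ℕ → Finset (Fin d → ℤ) :=
    fun N => Fintype.piFinset fun _ : Fin d => Finset.Icc (-(N:ℤ)) (N:ℤ) with hbox
  have hmem : ∀ (N : ℕ) (n : Fin d → ℤ),
      n ∈ box N ↔ (Finset.univ.sup fun j => (n j).natAbs) ≤ N := by
    intro N n
    rw [hbox]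
    rw [Fintype.mem_piFinset]
    constructor
    · intro h
      apply Finset.sup_le
      intro j _
      have := h j
      rw [Finset.mem_Icc] at this
      omega
    · intro h j
      have hj : (n j).natAbs ≤ N :=
        (Finset.le_sup (f := fun j => (n j).natAbs) (Finset.mem_univ j)).trans h
      rw [Finset.mem_Icc]
      omega
  have hmono : Monotone box := by
    intro N M hNM
    apply Fintype.piFinset_subset
    intro j
    apply Finset.Icc_subset_Icc <;> omega
  have hexh : ∀ n : Fin d → ℤ, ∃ N : ℕ, n ∈ box N := by
    intro n
    exact ⟨Finset.univ.sup fun j => (n j).natAbs, (hmem _ n).2 le_rfl⟩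
  have htend : Filter.Tendsto box Filter.atTop Filter.atTop :=
    Filter.tendsto_atTop_finset_of_monotone hmono hexh
  have hcomp := (tendsto_tsum_compl_atTop_zero f).comp htend
  apply hcomp.congr
  intro N
  have hiff : ∀ n : Fin d → ℤ,
      (N < Finset.univ.sup fun j => (n j).natAbs) ↔ (n ∉ box N) := by
    intro n
    rw [hmem N n, not_le]
  simp only [Function.comp_apply]
  show (∑' a : {m : Fin d → ℤ // m ∉ box N}, f a.1)
      = ∑' n : {n : Fin d → ℤ // N < Finset.univ.sup fun j => (n j).natAbs}, f n.1
  exact (Equiv.tsum_eq (Equiv.subtypeEquivRight hiff) (fun b => f b.1)).symm
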